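/- Let X be a finite-dimensional real polyhedral Banach space and T : X → X linear. If f(Tx) = 0 for every x in the unit sphere and every support functional f at x (i.e., f(x) = ‖x‖ = ‖f‖ = 1), then T = 0. Consequently, the numerical radius ‖·‖_w is a norm on L(X). -/

import Mathlib

/-- The numerical radius of a bounded linear operator. -/
noncomputable def nrad {𝕜 X : Type*} [RCLike 𝕜] [NormedAddCommGroup X] [NormedSpace 𝕜 X]
    (T : X →L[𝕜] X) : ℝ :=
  sSup {r : ℝ | ∃ (x : X) (f : X →L[𝕜] 𝕜), ‖x‖ = 1 ∧ ‖f‖ = 1 ∧ f x = 1 ∧ r = ‖f (T x)‖}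

open Set Metric

lemma vanish_aux {X : Type*} [NormedAddCommGroup X] [NormedSpace ℝ X] [FiniteDimensional ℝ X]
    (hpoly : (Set.extremePoints ℝ (Metric.closedBall (0 : X) 1)).Finite)
    (g : X →L[ℝ] ℝ)
    (hg : g ∈ Set.extremePoints ℝ (Metric.closedBall (0 : X →L[ℝ] ℝ) 1))
    (h' : X →L[ℝ] ℝ)
    (hh' : ∀ x : X, ‖x‖ ≤ 1 → g x = 1 → h' x = 0) : h' = 0 := by
  have hgball : g ∈ Metric.closedBall (0 : X →L[ℝ] ℝ) 1 := hg.1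
  have hgnorm : ‖g‖ ≤ 1 := by simpa using hgball
  -- the primal ball is the convex hull of its (finitely many) extreme points
  have hB : Metric.closedBall (0 : X) 1 =
      convexHull ℝ (Set.extremePoints ℝ (Metric.closedBall (0 : X) 1)) := by
    have := closure_convexHull_extremePoints (isCompact_closedBall (0:X) 1) (convex_closedBall 0 1)
    rwa [(hpoly.isCompact_convexHull ℝ).isClosed.closure_eq, eq_comm] at this
  have hg_le : ∀ x : X, ‖x‖ ≤ 1 → g x ≤ 1 := by
    intro x hx
    calc g x ≤ |g x| := le_abs_self _
    _ ≤ ‖g‖ * ‖x‖ := g.le_opNorm x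
    _ ≤ 1 * 1 := mul_le_mul hgnorm hx (norm_nonneg x) zero_le_one
    _ = 1 := one_mul 1
  -- a uniform Lipschitz-type estimate on the ball, from the extreme points
  obtain ⟨K0, hK0⟩ := (hpoly.toFinset.image fun e => ‖h' e‖ / (1 - g e)).exists_le
  set K : ℝ := max K0 0 with hK
  have hKnn : (0:ℝ) ≤ K := le_max_right _ _
  have hmain : ∀ x ∈ Metric.closedBall (0 : X) 1, ‖h' x‖ ≤ K * (1 - g x) := by
    have hsub : Metric.closedBall (0 : X) 1 ⊆ {x : X | ‖h' x‖ ≤ K * (1 - g x)} := by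
      rw [hB]
      apply convexHull_min
      · intro e he
        have heball : e ∈ Metric.closedBall (0 : X) 1 := extremePoints_subset he
        have henorm : ‖e‖ ≤ 1 := by simpa using heball
        by_cases hge : g e = 1
        · have : h' e = 0 := hh' e henorm hge
          simp [this, hge]
        · have hlt : g e < 1 := lt_of_le_of_ne (hg_le e henorm) hge
          have hpos : (0:ℝ) < 1 - g e := by linarith
          have : ‖h' e‖ / (1 - g e) ≤ K0 := by
            apply hK0
            exact Finset.mem_image.2 ⟨e, hpoly.mem_toFinset.2 he, rfl⟩
          have : ‖h' e‖ / (1 - g e) ≤ K := le_trans this (le_max_left _ _)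
          calc ‖h' e‖ = ‖h' e‖ / (1 - g e) * (1 - g e) := by field_simp
          _ ≤ K * (1 - g e) := by nlinarith
      · have h1 : Convex ℝ {x : X | h' x + K * g x ≤ K} :=
          convex_halfSpace_le (f := fun x : X => h' x + K * g x)
            ⟨fun a b => by simp [mul_add]; ring, fun c a => by simp [map_smul]; ring⟩ K
        have h2 : Convex ℝ {x : X | -(h' x) + K * g x ≤ K} :=
          convex_halfSpace_le (f := fun x : X => -(h' x) + K * g x)
            ⟨fun a b => by simp [mul_add]; ring, fun c a => by simp [map_smul]; ring⟩ K
        have : {x : X | ‖h' x‖ ≤ K * (1 - g x)} =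
            {x : X | h' x + K * g x ≤ K} ∩ {x : X | -(h' x) + K * g x ≤ K} := by
          ext x
          simp only [Set.mem_setOf_eq, Set.mem_inter_iff, Real.norm_eq_abs, abs_le]
          constructor <;> intro hx <;> constructor <;> linarith [hx.1, hx.2]
        rw [this]
        exact h1.inter h2
    exact fun x hx => hsub hx
  -- perturbations of g stay in the dual ball
  set ε : ℝ := 1 / (K + 1) with hε
  have hεpos : (0:ℝ) < ε := by positivity
  have hpert : ∀ s : ℝ, |s| ≤ ε → g + s • h' ∈ Metric.closedBall (0 : X →L[ℝ] ℝ) 1 := by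
    intro s hs
    rw [Metric.mem_closedBall, dist_zero_right]
    apply ContinuousLinearMap.opNorm_le_of_unit_norm zero_le_one
    intro x hx
    have hx1 : ‖x‖ ≤ 1 := le_of_eq hx
    have hb : ‖h' x‖ ≤ K * (1 - g x) := hmain x (by simpa using hx1)
    have hb2 : ‖h' x‖ ≤ K * (1 + g x) := by
      have := hmain (-x) (by simpa using hx1)
      simpa [sub_neg_eq_add] using this
    have hgx1 : g x ≤ 1 := hg_le x hx1
    have hgxm : -1 ≤ g x := by
      have := hg_le (-x) (by simpa using hx1)
      simp only [map_neg] at this; linarith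
    have key : ∀ c : ℝ, 0 ≤ c → ‖h' x‖ ≤ K * c → |s * h' x| ≤ c := by
      intro c hc hbc
      rw [abs_mul]
      calc |s| * |h' x| ≤ ε * (K * c) := by
            apply mul_le_mul hs ?_ (abs_nonneg _) (le_of_lt hεpos)
            simpa [Real.norm_eq_abs] using hbc
      _ ≤ c := by
            rw [hε, div_mul_eq_mul_div, div_le_iff₀ (by positivity)]
            nlinarith
    have hsb : |s * h' x| ≤ 1 - g x := key _ (by linarith) hb
    have hsb2 : |s * h' x| ≤ 1 + g x := key _ (by linarith) hb2
    simp only [ContinuousLinearMap.add_apply, ContinuousLinearMap.coe_smul',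
      Pi.smul_apply, smul_eq_mul, Real.norm_eq_abs]
    rw [abs_le]
    constructor <;> [linarith [(abs_le.1 hsb2).1]; linarith [(abs_le.1 hsb).2]]
  -- extremality of g forces the perturbation to be trivial
  have hmem : g ∈ openSegment ℝ (g - ε • h') (g + ε • h') := by
    exact ⟨1/2, 1/2, by norm_num, by norm_num, by norm_num, by module⟩
  have hm1 : g - ε • h' ∈ Metric.closedBall (0 : X →L[ℝ] ℝ) 1 := by
    have := hpert (-ε) (by simp [abs_of_pos hεpos, le_of_lt hεpos])
    convert this using 2; module
  have hm2 : g + ε • h' ∈ Metric.closedBall (0 : X →L[ℝ] ℝ) 1 :=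
    hpert ε (by simp [abs_of_pos hεpos])
  have := hg.2 hm1 hm2 hmem
  have h0 : ε • h' = 0 := by
    have : g + ε • h' = g := by
      rw [← sub_eq_zero] at this ⊢; rw [← neg_eq_zero]; convert this using 1; abel
    have h1 : g + ε • h' = g + 0 := by rw [add_zero]; exact this
    exact add_left_cancel h1
  ext x
  have := congrArg (fun f : X →L[ℝ] ℝ => f x) h0
  simp only [ContinuousLinearMap.coe_smul', Pi.smul_apply, smul_eq_mul,
    ContinuousLinearMap.zero_apply] at this
  simpa [ContinuousLinearMap.zero_apply] using
    (mul_eq_zero.1 this).resolve_left (ne_of_gt hεpos)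

lemma key_zero {X : Type*} [NormedAddCommGroup X] [NormedSpace ℝ X] [FiniteDimensional ℝ X]
    (hpoly : (Set.extremePoints ℝ (Metric.closedBall (0 : X) 1)).Finite)
    (T : X →L[ℝ] X)
    (h : ∀ (x : X) (f : X →L[ℝ] ℝ), ‖x‖ = 1 → ‖f‖ = 1 → f x = 1 → f (T x) = 0) :
    T = 0 := by
  ext y
  simp only [ContinuousLinearMap.zero_apply]
  by_contra hz
  obtain ⟨f, hf1, hfval⟩ := exists_dual_vector ℝ (T y) (norm_ne_zero_iff.2 hz)
  -- every extreme point of the dual ball kills T y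
  have hext : ∀ g ∈ Set.extremePoints ℝ (Metric.closedBall (0 : X →L[ℝ] ℝ) 1),
      g (T y) = 0 := by
    intro g hg
    have hcomp : g.comp T = 0 := by
      apply vanish_aux hpoly g hg
      intro x hx hgx
      have hgnorm : ‖g‖ ≤ 1 := by simpa using hg.1
      have h1 : (1:ℝ) ≤ ‖g‖ * ‖x‖ := by
        calc (1:ℝ) = g x := hgx.symm
        _ ≤ |g x| := le_abs_self _
        _ ≤ ‖g‖ * ‖x‖ := g.le_opNorm x
      have hx1 : ‖x‖ = 1 := by nlinarith [norm_nonneg g, norm_nonneg x]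
      have hg1 : ‖g‖ = 1 := by nlinarith [norm_nonneg g, norm_nonneg x]
      exact h x g hx1 hg1 hgx
    have := congrArg (fun u : X →L[ℝ] ℝ => u y) hcomp
    simpa using this
  -- hence every element of the dual ball kills T y
  have hZconv : Convex ℝ {u : X →L[ℝ] ℝ | u (T y) = 0} :=
    convex_hyperplane (f := fun u : X →L[ℝ] ℝ => u (T y))
      ⟨fun a b => rfl, fun c a => by simp⟩ 0
  have hZclosed : IsClosed {u : X →L[ℝ] ℝ | u (T y) = 0} := by
    have : Continuous (fun u : X →L[ℝ] ℝ => u (T y)) :=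
      (ContinuousLinearMap.apply ℝ ℝ (T y)).continuous
    exact isClosed_eq this continuous_const
  have hball : f ∈ {u : X →L[ℝ] ℝ | u (T y) = 0} := by
    have hsub : Metric.closedBall (0 : X →L[ℝ] ℝ) 1 ⊆ {u : X →L[ℝ] ℝ | u (T y) = 0} := by
      rw [← closure_convexHull_extremePoints (isCompact_closedBall (0 : X →L[ℝ] ℝ) 1)
        (convex_closedBall _ 1)]
      exact closure_minimal (convexHull_min hext hZconv) hZclosed
    exact hsub (by simpa using le_of_eq hf1)
  have : f (T y) = ‖T y‖ := by simpa using hfval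
  rw [hball] at this
  exact hz (norm_eq_zero.1 this.symm)

/-- on a finite-dimensional real polyhedral Banach space, if `f (T x) = 0`
for every unit vector `x` and every support functional `f` at `x`, then `T = 0`;
consequently the numerical radius is a norm on `L(X)`. -/
theorem polyhedral_numerical_radius_norm (X : Type*) [NormedAddCommGroup X]
    [NormedSpace ℝ X] [FiniteDimensional ℝ X]
    (hpoly : (Set.extremePoints ℝ (Metric.closedBall (0 : X) 1)).Finite)
    (T : X →L[ℝ] X)
    (h : ∀ (x : X) (f : X →L[ℝ] ℝ), ‖x‖ = 1 → ‖f‖ = 1 → f x = 1 → f (T x) = 0) :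
    T = 0 ∧ ∀ S : X →L[ℝ] X, nrad S = 0 → S = 0 := by
  refine ⟨key_zero hpoly T h, fun S hS => ?_⟩
  apply key_zero hpoly S
  intro x f hx hf hfx
  have hmem : ‖f (S x)‖ ∈ {r : ℝ | ∃ (x : X) (f : X →L[ℝ] ℝ),
      ‖x‖ = 1 ∧ ‖f‖ = 1 ∧ f x = 1 ∧ r = ‖f (S x)‖} := ⟨x, f, hx, hf, hfx, rfl⟩
  have hbdd : BddAbove {r : ℝ | ∃ (x : X) (f : X →L[ℝ] ℝ),
      ‖x‖ = 1 ∧ ‖f‖ = 1 ∧ f x = 1 ∧ r = ‖f (S x)‖} := by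
    refine ⟨‖S‖, fun r hr => ?_⟩
    obtain ⟨x', f', hx', hf', _, hr'⟩ := hr
    rw [hr']
    calc ‖f' (S x')‖ ≤ ‖f'‖ * ‖S x'‖ := f'.le_opNorm _
    _ ≤ 1 * (‖S‖ * ‖x'‖) := by rw [hf', one_mul]; simpa using S.le_opNorm x'
    _ = ‖S‖ := by rw [hx']; ring
  have hle : ‖f (S x)‖ ≤ 0 := by
    have := le_csSup hbdd hmem
    rwa [show sSup {r : ℝ | ∃ (x : X) (f : X →L[ℝ] ℝ),
      ‖x‖ = 1 ∧ ‖f‖ = 1 ∧ f x = 1 ∧ r = ‖f (S x)‖} = nrad S from rfl, hS] at this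
  exact norm_le_zero_iff.1 hle
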